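/- Let ((A_t, B_t)) be iid with A a d×d random matrix, B ∈ ℝ^d, E[log‖A‖] < 0 and E[log₊‖B‖] < ∞. Then the series R = Σ_{k=0}^∞ Π_k B_{k+1}, where Π_k = A₁⋯A_k (Π₀ = Id), converges almost surely, and R satisfies the distributional fixed point equation R =_d A·R' + B where R' is a copy of R independent of (A, B). -/

import Mathlib

open MeasureTheory Filter Topology ProbabilityTheory
open scoped ENNReal NNReal

/-- `d × d` real matrices, modelled as continuous linear endomorphisms of
`ℝ^d` (so that `‖·‖` is the operator norm and `*`/`List.prod` is matrix
multiplication). -/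
abbrev Mat (d : ℕ) := EuclideanSpace ℝ (Fin d) →L[ℝ] EuclideanSpace ℝ (Fin d)

/-- The ordered product `Π_k = A₁ ⋯ A_k` (here `0`-indexed: `A 0 * A 1 * ⋯ * A (k-1)`). -/
noncomputable def Pik {Ω : Type*} {d : ℕ} (A : ℕ → Ω → Mat d) (k : ℕ) (ω : Ω) : Mat d :=
  ((List.range k).map (fun j => A j ω)).prod

section Aux

variable {d : ℕ} {Ω : Type*}

lemma Pik_zero (A : ℕ → Ω → Mat d) (ω : Ω) : Pik A 0 ω = 1 := rfl

lemma Pik_succ (A : ℕ → Ω → Mat d) (k : ℕ) (ω : Ω) :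
    Pik A (k + 1) ω = Pik A k ω * A k ω := by
  simp [Pik, List.range_succ]

lemma Pik_succ_left (A : ℕ → Ω → Mat d) (k : ℕ) (ω : Ω) :
    Pik A (k + 1) ω = A 0 ω * Pik (fun j => A (j + 1)) k ω := by
  simp only [Pik, List.range_succ_eq_map, List.map_cons, List.prod_cons, List.map_map]
  rfl

lemma norm_Pik_apply_le (A : ℕ → Ω → Mat d) (ω : Ω) :
    ∀ (k : ℕ) (v : EuclideanSpace ℝ (Fin d)),
      ‖Pik A k ω v‖ ≤ (∏ j ∈ Finset.range k, ‖A j ω‖) * ‖v‖ := by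
  intro k
  induction k with
  | zero =>
    intro v
    rw [Pik_zero]
    rw [ContinuousLinearMap.one_apply, Finset.range_zero, Finset.prod_empty, one_mul]
  | succ n ih =>
    intro v
    rw [Pik_succ]
    calc ‖(Pik A n ω * A n ω) v‖ = ‖Pik A n ω (A n ω v)‖ := by
          rw [ContinuousLinearMap.mul_apply]
      _ ≤ (∏ j ∈ Finset.range n, ‖A j ω‖) * ‖A n ω v‖ := ih _
      _ ≤ (∏ j ∈ Finset.range n, ‖A j ω‖) * (‖A n ω‖ * ‖v‖) := by
          refine mul_le_mul_of_nonneg_left ((A n ω).le_opNorm v) ?_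
          exact Finset.prod_nonneg fun j _ => norm_nonneg _
      _ = (∏ j ∈ Finset.range (n + 1), ‖A j ω‖) * ‖v‖ := by
          rw [Finset.prod_range_succ]; ring

variable [MeasurableSpace Ω] [MeasurableSpace (Mat d)] [BorelSpace (Mat d)]


lemma measurable_Pik {A : ℕ → Ω → Mat d} (hA : ∀ j, Measurable (A j)) (k : ℕ) :
    Measurable (fun ω => Pik A k ω) := by
  induction k with
  | zero => simpa [Pik_zero] using measurable_const
  | succ n ih =>
    simp only [Pik_succ]
    exact ih.mul (hA n)

omit [MeasurableSpace Ω] in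
lemma measurableSet_summable {α : Type*} [MeasurableSpace α]
    {g : ℕ → α → EuclideanSpace ℝ (Fin d)} (hg : ∀ k, Measurable (g k)) :
    MeasurableSet {x | Summable fun k => g k x} := by
  have h1 : ∀ x : α, Summable (fun k => g k x) ↔ (∑' k, (‖g k x‖₊ : ℝ≥0∞)) ≠ ⊤ := by
    intro x
    rw [← summable_norm_iff]
    simp only [← coe_nnnorm]
    rw [NNReal.summable_coe, ← ENNReal.tsum_coe_ne_top_iff_summable]
  have h2 : {x | Summable fun k => g k x}
      = (fun x => ∑' k, (‖g k x‖₊ : ℝ≥0∞)) ⁻¹' {⊤}ᶜ := by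
    ext x; simpa using h1 x
  rw [h2]
  have : Measurable fun x => ∑' k, (‖g k x‖₊ : ℝ≥0∞) :=
    Measurable.ennreal_tsum fun k => (hg k).nnnorm.coe_nnreal_ennreal
  exact this (measurableSet_singleton ⊤).compl

lemma measurable_tsum' {α : Type*} [MeasurableSpace α]
    {g : ℕ → α → EuclideanSpace ℝ (Fin d)} (hg : ∀ k, Measurable (g k)) :
    Measurable fun x => ∑' k, g k x := by
  classical
  set s := {x | Summable fun k => g k x} with hs
  have hsm : MeasurableSet s := measurableSet_summable hg
  have hmeas : ∀ n, Measurable (s.piecewise (fun x => ∑ k ∈ Finset.range n, g k x)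
      (fun _ => (0 : EuclideanSpace ℝ (Fin d)))) := fun n =>
    Measurable.piecewise hsm (Finset.measurable_sum (Finset.range n) fun k _ => hg k)
      measurable_const
  apply measurable_of_tendsto_metrizable hmeas
  rw [tendsto_pi_nhds]
  intro x
  by_cases hx : x ∈ s
  · simp only [Set.piecewise_eq_of_mem _ _ _ hx]
    exact hx.hasSum.tendsto_sum_nat
  · simp only [Set.piecewise_eq_of_notMem _ _ _ hx]
    rw [tsum_eq_zero_of_not_summable hx]
    exact tendsto_const_nhds

end Aux

lemma tendsto_single_div {u : ℕ → ℝ} {c : ℝ}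
    (hω : Tendsto (fun n : ℕ => (∑ i ∈ Finset.range n, u i) / n) atTop (𝓝 c)) :
    Tendsto (fun n : ℕ => u n / n) atTop (𝓝 0) := by
  have h1 : Tendsto (fun n : ℕ => (∑ i ∈ Finset.range (n+1), u i) / (n+1)) atTop (𝓝 c) := by
    apply (hω.comp (tendsto_add_atTop_nat 1)).congr
    intro n
    simp only [Function.comp_apply]
    push_cast
    ring_nf
  have h2 : Tendsto (fun n : ℕ => ((n : ℝ) + 1) / n) atTop (𝓝 1) := by
    have : Tendsto (fun n : ℕ => 1 + (n : ℝ)⁻¹) atTop (𝓝 (1 + 0)) :=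
      tendsto_const_nhds.add tendsto_inv_atTop_nhds_zero_nat
    rw [add_zero] at this
    apply this.congr'
    filter_upwards [eventually_ge_atTop 1] with n hn
    have hn' : (n : ℝ) ≠ 0 := Nat.cast_ne_zero.2 (by omega)
    field_simp
  have h3 : Tendsto (fun n : ℕ => (∑ i ∈ Finset.range (n+1), u i) / n) atTop (𝓝 c) := by
    have := h1.mul h2
    rw [mul_one] at this
    apply this.congr
    intro n
    rcases Nat.eq_zero_or_pos n with rfl | hn
    · simp
    · have hn' : (n : ℝ) ≠ 0 := Nat.cast_ne_zero.2 (by omega)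
      have hn1 : ((n : ℝ) + 1) ≠ 0 := by positivity
      field_simp
  have h4 := h3.sub hω
  rw [sub_self] at h4
  apply h4.congr
  intro n
  rw [Finset.sum_range_succ, ← sub_div]
  ring_nf

theorem stmt14 {Ω : Type*} [MeasureSpace Ω] [IsProbabilityMeasure (ℙ : Measure Ω)]
    {d : ℕ} [MeasurableSpace (Mat d)] [BorelSpace (Mat d)]
    (A : ℕ → Ω → Mat d) (B : ℕ → Ω → EuclideanSpace ℝ (Fin d))
    (hAm : ∀ j, Measurable (A j)) (hBm : ∀ j, Measurable (B j))
    (hiid : iIndepFun (fun j ω => (A j ω, B j ω)) ℙ)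
    (hident : ∀ j, IdentDistrib (fun ω => (A j ω, B j ω)) (fun ω => (A 0 ω, B 0 ω)) ℙ ℙ)
    (hlogA : Integrable (fun ω => Real.log ‖A 0 ω‖) ℙ)
    (hlogAneg : (∫ ω, Real.log ‖A 0 ω‖ ∂ℙ) < 0)
    (hlogB : Integrable (fun ω => max (Real.log ‖B 0 ω‖) 0) ℙ) :
    (∀ᵐ ω ∂ℙ, Summable (fun k => (Pik A k ω) (B k ω))) ∧
    (∀ R' : Ω → EuclideanSpace ℝ (Fin d), Measurable R' →
      IndepFun (fun ω => (A 0 ω, B 0 ω)) R' ℙ →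
      IdentDistrib R' (fun ω => ∑' k, (Pik A k ω) (B k ω)) ℙ ℙ →
      IdentDistrib (fun ω => ∑' k, (Pik A k ω) (B k ω))
        (fun ω => (A 0 ω) (R' ω) + B 0 ω) ℙ ℙ) := by
  classical
  have hYm : ∀ j, Measurable (fun ω => (A j ω, B j ω)) := fun j => (hAm j).prodMk (hBm j)
  have hφm : Measurable (fun p : Mat d × EuclideanSpace ℝ (Fin d) => Real.log ‖p.1‖) :=
    Real.measurable_log.comp measurable_fst.norm
  have hψm : Measurable (fun p : Mat d × EuclideanSpace ℝ (Fin d) => max (Real.log ‖p.2‖) 0) :=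
    (Real.measurable_log.comp measurable_snd.norm).max measurable_const
  have hSA := strong_law_ae_real (fun j ω => Real.log ‖A j ω‖) hlogA
    (fun i j hij => ((hiid.indepFun hij).comp hφm hφm))
    (fun i => (hident i).comp hφm)
  have hSB := strong_law_ae_real (fun j ω => max (Real.log ‖B j ω‖) 0) hlogB
    (fun i j hij => ((hiid.indepFun hij).comp hψm hψm))
    (fun i => (hident i).comp hψm)
  set μA := ∫ ω, Real.log ‖A 0 ω‖ ∂ℙ with hμA
  have part1 : ∀ᵐ ω ∂ℙ, Summable (fun k => (Pik A k ω) (B k ω)) := by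
    filter_upwards [hSA, hSB] with ω hA0 hB0'
    have hB0 : Tendsto (fun n : ℕ => max (Real.log ‖B n ω‖) 0 / n) atTop (𝓝 0) :=
      tendsto_single_div hB0'
    have hcomb : Tendsto (fun n : ℕ =>
        ((∑ i ∈ Finset.range n, Real.log ‖A i ω‖) + max (Real.log ‖B n ω‖) 0) / n)
        atTop (𝓝 (μA + 0)) := by
      simp_rw [add_div]
      exact hA0.add hB0
    rw [add_zero] at hcomb
    have hev : ∀ᶠ n in atTop,
        ((∑ i ∈ Finset.range n, Real.log ‖A i ω‖) + max (Real.log ‖B n ω‖) 0) / n < μA / 2 :=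
      (tendsto_order.1 hcomb).2 _ (by linarith)
    have hgeo : Summable (fun n : ℕ => Real.exp (μA / 2) ^ n) := by
      refine summable_geometric_of_lt_one (Real.exp_pos _).le ?_
      have := Real.exp_lt_exp.2 (show μA / 2 < 0 by linarith)
      rwa [Real.exp_zero] at this
    apply hgeo.of_norm_bounded_eventually _
    rw [Nat.cofinite_eq_atTop]
    filter_upwards [hev, eventually_ge_atTop 1] with n hn hn1
    have hnpos : (0 : ℝ) < n := by exact_mod_cast Nat.pos_of_ne_zero (by omega)
    have hlt : (∑ i ∈ Finset.range n, Real.log ‖A i ω‖) + max (Real.log ‖B n ω‖) 0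
        < μA / 2 * n := (div_lt_iff₀ hnpos).1 hn
    calc ‖Pik A n ω (B n ω)‖
        ≤ (∏ j ∈ Finset.range n, ‖A j ω‖) * ‖B n ω‖ := norm_Pik_apply_le A ω n _
      _ ≤ Real.exp (∑ j ∈ Finset.range n, Real.log ‖A j ω‖) *
            Real.exp (max (Real.log ‖B n ω‖) 0) := by
          apply mul_le_mul ?_ ?_ (norm_nonneg _) (Real.exp_pos _).le
          · rw [Real.exp_sum]
            exact Finset.prod_le_prod (fun j _ => norm_nonneg _)
              (fun j _ => Real.le_exp_log _)
          · exact (Real.le_exp_log _).trans (Real.exp_le_exp.2 (le_max_left _ _))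
      _ = Real.exp ((∑ j ∈ Finset.range n, Real.log ‖A j ω‖) + max (Real.log ‖B n ω‖) 0) :=
          (Real.exp_add _ _).symm
      _ ≤ Real.exp (μA / 2 * n) := Real.exp_le_exp.2 hlt.le
      _ = Real.exp (μA / 2) ^ n := by rw [mul_comm, Real.exp_nat_mul]
  refine ⟨part1, ?_⟩
  intro R' hR'm hR'indep hR'id
  -- ### Part 2
  let Y : ℕ → Ω → Mat d × EuclideanSpace ℝ (Fin d) := fun j ω => (A j ω, B j ω)
  let S : Ω → ℕ → Mat d × EuclideanSpace ℝ (Fin d) := fun ω j => (A j ω, B j ω)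
  let S' : Ω → ℕ → Mat d × EuclideanSpace ℝ (Fin d) := fun ω j => (A (j+1) ω, B (j+1) ω)
  have hSm : Measurable S := measurable_pi_lambda _ hYm
  have hS'm : Measurable S' := measurable_pi_lambda _ (fun j => hYm (j+1))
  let Aseq : ℕ → (ℕ → Mat d × EuclideanSpace ℝ (Fin d)) → Mat d := fun j y => (y j).1
  let g : ℕ → (ℕ → Mat d × EuclideanSpace ℝ (Fin d)) → EuclideanSpace ℝ (Fin d) :=
    fun k y => (Pik Aseq k y) ((y k).2)
  have hAseqm : ∀ j, Measurable (Aseq j) := fun j => (measurable_pi_apply j).fst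
  have happly : Measurable (fun p : Mat d × EuclideanSpace ℝ (Fin d) => p.1 p.2) :=
    isBoundedBilinearMap_apply.continuous.measurable
  have hgm : ∀ k, Measurable (g k) := fun k =>
    happly.comp ((measurable_Pik hAseqm k).prodMk ((measurable_pi_apply k).snd))
  let F : (ℕ → Mat d × EuclideanSpace ℝ (Fin d)) → EuclideanSpace ℝ (Fin d) :=
    fun y => ∑' k, g k y
  have hF : Measurable F := measurable_tsum' hgm
  -- the law of `S` equals the law of the shifted sequence `S'`
  haveI hP1 : IsProbabilityMeasure (Measure.map S ℙ) := Measure.isProbabilityMeasure_map hSm.aemeasurable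
  haveI hP2 : IsProbabilityMeasure (Measure.map S' ℙ) := Measure.isProbabilityMeasure_map hS'm.aemeasurable
  have hSS' : Measure.map S ℙ = Measure.map S' ℙ := by
    refine ext_of_generate_finite _ generateFrom_squareCylinders.symm
      (isPiSystem_squareCylinders (fun i => MeasurableSpace.isPiSystem_measurableSet)
        (fun i => by simp only [Set.mem_setOf_eq]; exact MeasurableSet.univ)) ?_ (by simp)
    rintro _ ⟨I, t, ht, rfl⟩
    have htm : ∀ i, MeasurableSet (t i) := fun i => ht i (Set.mem_univ i)
    have hpim : MeasurableSet ((I : Set ℕ).pi t) :=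
      MeasurableSet.pi (Finset.countable_toSet I) (fun i _ => htm i)
    rw [Measure.map_apply hSm hpim, Measure.map_apply hS'm hpim]
    have hpre : S ⁻¹' ((I : Set ℕ).pi t) = ⋂ i ∈ I, Y i ⁻¹' t i := by
      ext ω
      simp [S, Y, Set.mem_pi]
    have hpre' : S' ⁻¹' ((I : Set ℕ).pi t)
        = ⋂ j ∈ I.image (· + 1), Y j ⁻¹' t (j - 1) := by
      ext ω
      simp only [Set.mem_preimage, Set.mem_pi, Finset.mem_coe, Set.mem_iInter,
        Finset.mem_image, S, Y]
      constructor
      · rintro h j ⟨i, hi, rfl⟩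
        simpa using h i hi
      · intro h i hi
        simpa using h (i + 1) ⟨i, hi, rfl⟩
    rw [hpre, hpre']
    have e1 := hiid.measure_inter_preimage_eq_mul I (fun i _ => htm i)
    have e2 := hiid.measure_inter_preimage_eq_mul (I.image (· + 1))
      (sets := fun j => t (j - 1)) (fun j _ => htm (j - 1))
    rw [show (⋂ i ∈ I, Y i ⁻¹' t i) = ⋂ i ∈ I, (fun j ω => (A j ω, B j ω)) i ⁻¹' t i from rfl,
      e1,
      show (⋂ j ∈ I.image (· + 1), Y j ⁻¹' t (j - 1))
        = ⋂ j ∈ I.image (· + 1), (fun j ω => (A j ω, B j ω)) j ⁻¹' t (j - 1) from rfl,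
      e2, Finset.prod_image (fun a _ b _ h => by omega)]
    refine Finset.prod_congr rfl fun i _ => ?_
    show ℙ ((fun ω => (A i ω, B i ω)) ⁻¹' t i)
        = ℙ ((fun ω => (A (i+1) ω, B (i+1) ω)) ⁻¹' t i)
    have m1 : ℙ ((fun ω => (A (i+1) ω, B (i+1) ω)) ⁻¹' t i)
        = Measure.map (fun ω => (A (i+1) ω, B (i+1) ω)) ℙ (t i) :=
      (Measure.map_apply (hYm (i+1)) (htm i)).symm
    have m2 : ℙ ((fun ω => (A i ω, B i ω)) ⁻¹' t i)
        = Measure.map (fun ω => (A i ω, B i ω)) ℙ (t i) :=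
      (Measure.map_apply (hYm i) (htm i)).symm
    rw [m2, m1, (hident (i+1)).map_eq, (hident i).map_eq]
  -- `R` and `Rt` have the same law
  let Rt : Ω → EuclideanSpace ℝ (Fin d) := F ∘ S'
  have hRtm : Measurable Rt := hF.comp hS'm
  have hRm : Measurable (fun ω => ∑' k, (Pik A k ω) (B k ω)) := hF.comp hSm
  have hmapR : Measure.map (fun ω => ∑' k, (Pik A k ω) (B k ω)) ℙ = Measure.map Rt ℙ := by
    show Measure.map (F ∘ S) ℙ = _
    rw [← Measure.map_map hF hSm, hSS', Measure.map_map hF hS'm]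
  -- independence of `(A 0, B 0)` and `Rt`
  have hIndepYRt : IndepFun (fun ω => (A 0 ω, B 0 ω)) Rt ℙ := by
    have hii : iIndep (fun i => MeasurableSpace.comap (Y i) inferInstance) ℙ := hiid
    have hInd := indep_iSup_of_disjoint (fun i => (hYm i).comap_le) hii
      (S := {0}) (T := {i : ℕ | 1 ≤ i}) (by simp [Set.disjoint_left])
    have hle0 : MeasurableSpace.comap (Y 0) inferInstance
        ≤ ⨆ i ∈ ({0} : Set ℕ), MeasurableSpace.comap (Y i) inferInstance :=
      le_biSup (fun i : ℕ => MeasurableSpace.comap (Y i) inferInstance)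
        (Set.mem_singleton 0)
    have hle1 : MeasurableSpace.comap Rt inferInstance
        ≤ ⨆ i ∈ {i : ℕ | 1 ≤ i}, MeasurableSpace.comap (Y i) inferInstance := by
      have hc1 : MeasurableSpace.comap Rt inferInstance
          ≤ MeasurableSpace.comap S' MeasurableSpace.pi := by
        rw [show Rt = F ∘ S' from rfl, ← MeasurableSpace.comap_comp]
        exact MeasurableSpace.comap_mono hF.comap_le
      refine hc1.trans ?_
      rw [MeasurableSpace.pi, MeasurableSpace.comap_iSup]
      refine iSup_le fun j => ?_
      rw [MeasurableSpace.comap_comp]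
      exact le_biSup (fun i : ℕ => MeasurableSpace.comap (Y i) inferInstance)
        (show j + 1 ∈ {i : ℕ | 1 ≤ i} by simp)
    exact indep_of_indep_of_le_left (indep_of_indep_of_le_right hInd hle1) hle0
  -- a.s. summability of the shifted series
  have hsumset := measurableSet_summable hgm
  have hms : MeasurableSet {ω | Summable (fun k => (Pik A k ω) (B k ω))} := hSm hsumset
  have hms' : MeasurableSet
      {ω | Summable (fun k => (Pik (fun j => A (j+1)) k ω) (B (k+1) ω))} := hS'm hsumset
  have hS'sum : ∀ᵐ ω ∂ℙ, Summable (fun k => (Pik (fun j => A (j+1)) k ω) (B (k+1) ω)) := by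
    have e1 : ℙ (S' ⁻¹' {y | Summable fun k => g k y}) = 1 := by
      rw [← Measure.map_apply hS'm hsumset, ← hSS', Measure.map_apply hSm hsumset]
      rw [show (S ⁻¹' {y | Summable fun k => g k y})
        = {ω | Summable (fun k => (Pik A k ω) (B k ω))} from rfl]
      rw [← prob_compl_eq_zero_iff hms, Set.compl_setOf]
      exact ae_iff.1 part1
    rw [ae_iff]
    have : {ω | ¬ Summable (fun k => (Pik (fun j => A (j+1)) k ω) (B (k+1) ω))}
        = (S' ⁻¹' {y | Summable fun k => g k y})ᶜ := rfl
    rw [this]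
    exact (prob_compl_eq_zero_iff (hS'm hsumset)).2 e1
  -- the a.e. fixed point identity
  have h_ae_eq : (fun ω => ∑' k, (Pik A k ω) (B k ω)) =ᵐ[ℙ]
      fun ω => (A 0 ω) (Rt ω) + B 0 ω := by
    filter_upwards [hS'sum] with ω hω
    have hmapk : ∀ k, Pik A (k+1) ω (B (k+1) ω)
        = A 0 ω ((Pik (fun j => A (j+1)) k ω) (B (k+1) ω)) := by
      intro k
      rw [Pik_succ_left, ContinuousLinearMap.mul_apply]
    have hsum2 : Summable (fun k => Pik A (k+1) ω (B (k+1) ω)) := by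
      simp only [hmapk]
      exact ((A 0 ω).hasSum hω.hasSum).summable
    have hsumfull : Summable (fun k => Pik A k ω (B k ω)) := (summable_nat_add_iff 1).1 hsum2
    have hRtω : Rt ω = ∑' k, (Pik (fun j => A (j+1)) k ω) (B (k+1) ω) := rfl
    rw [Summable.tsum_eq_zero_add hsumfull]
    simp only [hmapk]
    rw [← (A 0 ω).map_tsum hω, Pik_zero, ContinuousLinearMap.one_apply, hRtω, add_comm]
  -- conclusion
  let φ : (Mat d × EuclideanSpace ℝ (Fin d)) × EuclideanSpace ℝ (Fin d)
      → EuclideanSpace ℝ (Fin d) := fun q => q.1.1 q.2 + q.1.2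
  have hφ : Measurable φ := by
    apply Continuous.measurable
    exact (isBoundedBilinearMap_apply.continuous.comp
      (continuous_fst.fst.prodMk continuous_snd)).add continuous_fst.snd
  have hpair1 : Measurable (fun ω => ((A 0 ω, B 0 ω), Rt ω)) := (hYm 0).prodMk hRtm
  have hpair2 : Measurable (fun ω => ((A 0 ω, B 0 ω), R' ω)) := (hYm 0).prodMk hR'm
  have key : Measure.map (fun ω => ((A 0 ω, B 0 ω), Rt ω)) ℙ
      = Measure.map (fun ω => ((A 0 ω, B 0 ω), R' ω)) ℙ := by
    rw [(indepFun_iff_map_prod_eq_prod_map_map (hYm 0).aemeasurable hRtm.aemeasurable).1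
        hIndepYRt,
      (indepFun_iff_map_prod_eq_prod_map_map (hYm 0).aemeasurable hR'm.aemeasurable).1
        hR'indep]
    congr 1
    rw [hR'id.map_eq, hmapR]
  refine ⟨hRm.aemeasurable, (hφ.comp hpair2).aemeasurable, ?_⟩
  calc Measure.map (fun ω => ∑' k, (Pik A k ω) (B k ω)) ℙ
      = Measure.map (φ ∘ fun ω => ((A 0 ω, B 0 ω), Rt ω)) ℙ := Measure.map_congr h_ae_eq
    _ = Measure.map φ (Measure.map (fun ω => ((A 0 ω, B 0 ω), Rt ω)) ℙ) :=
        (Measure.map_map hφ hpair1).symm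
    _ = Measure.map φ (Measure.map (fun ω => ((A 0 ω, B 0 ω), R' ω)) ℙ) := by rw [key]
    _ = Measure.map (fun ω => (A 0 ω) (R' ω) + B 0 ω) ℙ := Measure.map_map hφ hpair2
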